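/- arXiv:1109.3265 — 2 statements merged into one kernel-verified Lean document; each statement's English description precedes it below -/
import Mathlib

section
/- Stolarsky's invariance principle on S²: for any points z₁,…,z_N ∈ S², (1/N²)∑_{j,k}‖z_j − z_k‖ + 4·D_{L₂}(Z_N)² = ∫∫ ‖z − w‖ dσ(z)dσ(w) = 4/3, where D_{L₂} is the spherical cap L₂-discrepancy. -/
open MeasureTheory Metric
open scoped Classical RealInnerProductSpace Pointwise ENNReal

noncomputable def sigmaSphere : Measure (sphere (0 : EuclideanSpace ℝ (Fin 3)) 1) :=
  ((volume : Measure (EuclideanSpace ℝ (Fin 3))).toSphere Set.univ)⁻¹ •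
    (volume : Measure (EuclideanSpace ℝ (Fin 3))).toSphere

namespace Stolarsky

abbrev E3 := EuclideanSpace ℝ (Fin 3)
abbrev S2 := Metric.sphere (0 : E3) 1

lemma gamma_5_2 : Real.Gamma ((3:ℝ)/2 + 1) = 3/4 * Real.sqrt Real.pi := by
  rw [Real.Gamma_add_one (by norm_num)]
  have h32 : (3:ℝ)/2 = 1/2 + 1 := by norm_num
  rw [h32, Real.Gamma_add_one (by norm_num), Real.Gamma_one_half_eq]
  ring

lemma volume_ball_E3 : volume (ball (0:E3) 1) = ENNReal.ofReal (4 / 3 * Real.pi) := by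
  have h := EuclideanSpace.volume_ball (Fin 3) (0 : E3) 1
  simp only [Fintype.card_fin, Nat.cast_ofNat] at h
  rw [h, ENNReal.ofReal_one, one_pow, one_mul]
  congr 1
  rw [gamma_5_2]
  have hsq : Real.sqrt Real.pi ^ 3 = Real.pi * Real.sqrt Real.pi := by
    rw [pow_succ, Real.sq_sqrt Real.pi_pos.le]
  rw [hsq]
  have hs : Real.sqrt Real.pi ≠ 0 := by positivity
  field_simp

lemma norm_symm_pi2 (u : Fin 2 → ℝ) :
    ‖(MeasurableEquiv.toLp 2 (Fin 2 → ℝ)) u‖ = Real.sqrt (u 0 ^ 2 + u 1 ^ 2) := by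
  rw [EuclideanSpace.norm_eq]
  congr 1
  rw [Fin.sum_univ_two]
  norm_num [MeasurableEquiv.coe_toLp, sq_abs]

lemma disk_le_volume (a : ℝ) (ha : 0 ≤ a) :
    volume {u : Fin 2 → ℝ | u 0 ^ 2 + u 1 ^ 2 ≤ a}
      = ENNReal.ofReal Real.pi * ENNReal.ofReal a := by
  have key : {u : Fin 2 → ℝ | u 0 ^ 2 + u 1 ^ 2 ≤ a}
      = (MeasurableEquiv.toLp 2 (Fin 2 → ℝ)) ⁻¹' closedBall 0 (Real.sqrt a) := by
    ext u
    have h0 : (0:ℝ) ≤ u 0 ^ 2 + u 1 ^ 2 := by positivity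
    simp only [Set.mem_setOf_eq, Set.mem_preimage, mem_closedBall, dist_zero_right, norm_symm_pi2,
      Real.sqrt_le_sqrt_iff ha]
  rw [key,
    (show MeasurePreserving (MeasurableEquiv.toLp 2 (Fin 2 → ℝ)) volume volume from
      (EuclideanSpace.volume_preserving_symm_measurableEquiv_toLp (Fin 2)).symm).measure_preimage
      measurableSet_closedBall.nullMeasurableSet,
    EuclideanSpace.volume_closedBall]
  simp only [Fintype.card_fin, Nat.cast_ofNat]
  rw [show ((2:ℝ)/2 + 1) = 2 by norm_num, Real.Gamma_two,
    ← ENNReal.ofReal_pow (Real.sqrt_nonneg a), Real.sq_sqrt ha, Real.sq_sqrt Real.pi_pos.le,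
    div_one, mul_comm]

lemma disk_volume (R : ℝ) :
    volume {u : Fin 2 → ℝ | u 0 ^ 2 + u 1 ^ 2 < R}
      = ENNReal.ofReal Real.pi * ENNReal.ofReal R := by
  rcases le_or_gt R 0 with hR | hR
  · have : {u : Fin 2 → ℝ | u 0 ^ 2 + u 1 ^ 2 < R} = ∅ := by
      ext u
      simp only [Set.mem_setOf_eq, Set.mem_empty_iff_false, iff_false, not_lt]
      nlinarith [sq_nonneg (u 0), sq_nonneg (u 1)]
    rw [this, measure_empty, ENNReal.ofReal_eq_zero.2 hR, mul_zero]
  · have key : {u : Fin 2 → ℝ | u 0 ^ 2 + u 1 ^ 2 < R}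
        = (MeasurableEquiv.toLp 2 (Fin 2 → ℝ)) ⁻¹' ball 0 (Real.sqrt R) := by
      ext u
      have h0 : (0:ℝ) ≤ u 0 ^ 2 + u 1 ^ 2 := by positivity
      simp only [Set.mem_setOf_eq, Set.mem_preimage, mem_ball, dist_zero_right, norm_symm_pi2,
        Real.sqrt_lt_sqrt_iff h0]
    rw [key,
      (show MeasurePreserving (MeasurableEquiv.toLp 2 (Fin 2 → ℝ)) volume volume from
      (EuclideanSpace.volume_preserving_symm_measurableEquiv_toLp (Fin 2)).symm).measure_preimage
        measurableSet_ball.nullMeasurableSet,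
      EuclideanSpace.volume_ball]
    simp only [Fintype.card_fin, Nat.cast_ofNat]
    rw [show ((2:ℝ)/2 + 1) = 2 by norm_num, Real.Gamma_two,
      ← ENNReal.ofReal_pow (Real.sqrt_nonneg R), Real.sq_sqrt hR.le, Real.sq_sqrt Real.pi_pos.le,
      div_one, mul_comm]

lemma annulus_volume (a R : ℝ) (ha : 0 ≤ a) :
    volume {u : Fin 2 → ℝ | a < u 0 ^ 2 + u 1 ^ 2 ∧ u 0 ^ 2 + u 1 ^ 2 < R}
      = ENNReal.ofReal Real.pi * ENNReal.ofReal (R - a) := by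
  rcases le_or_gt R a with hR | hR
  · have : {u : Fin 2 → ℝ | a < u 0 ^ 2 + u 1 ^ 2 ∧ u 0 ^ 2 + u 1 ^ 2 < R} = ∅ := by
      ext u
      simp only [Set.mem_setOf_eq, Set.mem_empty_iff_false, iff_false, not_and, not_lt]
      intro h; linarith
    rw [this, measure_empty, show ENNReal.ofReal (R - a) = 0 from
      ENNReal.ofReal_eq_zero.2 (by linarith), mul_zero]
  · have hmeas : MeasurableSet {u : Fin 2 → ℝ | u 0 ^ 2 + u 1 ^ 2 ≤ a} := by
      apply measurableSet_le
      · exact ((measurable_pi_apply 0).pow_const 2).add ((measurable_pi_apply 1).pow_const 2)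
      · exact measurable_const
    have hsub : {u : Fin 2 → ℝ | u 0 ^ 2 + u 1 ^ 2 ≤ a} ⊆
        {u : Fin 2 → ℝ | u 0 ^ 2 + u 1 ^ 2 < R} := fun u hu => lt_of_le_of_lt hu hR
    have hset : {u : Fin 2 → ℝ | a < u 0 ^ 2 + u 1 ^ 2 ∧ u 0 ^ 2 + u 1 ^ 2 < R}
        = {u : Fin 2 → ℝ | u 0 ^ 2 + u 1 ^ 2 < R} \ {u : Fin 2 → ℝ | u 0 ^ 2 + u 1 ^ 2 ≤ a} := by
      ext u
      simp only [Set.mem_setOf_eq, Set.mem_diff, not_le]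
      tauto
    rw [hset, measure_diff hsub hmeas.nullMeasurableSet
        (by rw [disk_le_volume a ha]; exact ENNReal.mul_ne_top ENNReal.ofReal_ne_top ENNReal.ofReal_ne_top),
      disk_volume, disk_le_volume a ha,
      show ENNReal.ofReal R = ENNReal.ofReal (R - a) + ENNReal.ofReal a by
        rw [← ENNReal.ofReal_add (by linarith) ha]; ring_nf,
      mul_add, ENNReal.add_sub_cancel_right
        (ENNReal.mul_ne_top ENNReal.ofReal_ne_top ENNReal.ofReal_ne_top)]


/-- slice area identities -/
lemma slice_lt_iff (z : ℝ) (Q : ℝ) (hQ : 0 ≤ Q) : z^2 + Q < 1 ↔ Q < 1 - z^2 := by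
  constructor <;> intro h <;> linarith

lemma measurable_Q : Measurable (fun u : Fin 2 → ℝ => u 0 ^ 2 + u 1 ^ 2) :=
  ((measurable_pi_apply 0).pow_const 2).add ((measurable_pi_apply 1).pow_const 2)

lemma lintegral_piece {f : ℝ → ℝ} {a b : ℝ} (hab : a ≤ b) (hf : Continuous f)
    (hnn : ∀ z ∈ Set.Ioc a b, 0 ≤ f z) :
    ∫⁻ z in Set.Ioc a b, ENNReal.ofReal (f z) = ENNReal.ofReal (∫ z in a..b, f z) := by
  rw [intervalIntegral.integral_of_le hab,
    MeasureTheory.ofReal_integral_eq_lintegral_ofReal hf.integrableOn_Ioc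
      ((ae_restrict_iff' measurableSet_Ioc).2 (Filter.Eventually.of_forall hnn))]

lemma lintegral_zero_piece {f : ℝ → ℝ≥0∞} {s : Set ℝ} (hs : MeasurableSet s)
    (h : ∀ z ∈ s, f z = 0) : ∫⁻ z in s, f z = 0 := by
  rw [setLIntegral_congr_fun hs h]
  exact lintegral_zero

lemma lint_pos_part :
    ∫⁻ z in Set.Ioi (0:ℝ), ENNReal.ofReal Real.pi * ENNReal.ofReal (1 - z^2)
      = ENNReal.ofReal (2/3 * Real.pi) := by
  rw [← Set.Ioc_union_Ioi_eq_Ioi (zero_le_one (α := ℝ)),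
    lintegral_union measurableSet_Ioi
      (by rw [Set.disjoint_left]; intro z hz1 hz2; exact absurd hz2 (not_lt.2 hz1.2))]
  have h2 : ∫⁻ z in Set.Ioi (1:ℝ), ENNReal.ofReal Real.pi * ENNReal.ofReal (1 - z^2) = 0 :=
    lintegral_zero_piece measurableSet_Ioi (fun z hz => by
      rw [show ENNReal.ofReal (1 - z^2) = 0 from ENNReal.ofReal_eq_zero.2
        (by nlinarith [Set.mem_Ioi.mp hz]), mul_zero])
  rw [h2, add_zero, lintegral_const_mul' _ _ ENNReal.ofReal_ne_top,
    lintegral_piece zero_le_one (by continuity) (fun z hz => by nlinarith [hz.1, hz.2])]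
  have hint : ∫ z in (0:ℝ)..1, (1 - z^2) = 2/3 := by
    rw [intervalIntegral.integral_sub intervalIntegrable_const
      (intervalIntegral.intervalIntegrable_pow 2), intervalIntegral.integral_const, integral_pow]
    norm_num
  rw [hint, ← ENNReal.ofReal_mul Real.pi_pos.le]
  congr 1; ring

lemma cone_prod_volume (t : ℝ) (ht : t ∈ Set.Icc (-1:ℝ) 1) :
    (volume.prod (volume : Measure (Fin 2 → ℝ)))
        {q : ℝ × (Fin 2 → ℝ) | q.1^2 + (q.2 0 ^ 2 + q.2 1 ^ 2) < 1 ∧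
          t * Real.sqrt (q.1^2 + (q.2 0 ^ 2 + q.2 1 ^ 2)) < q.1}
      = ENNReal.ofReal (2/3 * Real.pi * (1 - t)) := by
  obtain ⟨hm1, hm2⟩ := ht
  have hq2 : Measurable (fun q : ℝ × (Fin 2 → ℝ) => q.1^2 + (q.2 0 ^ 2 + q.2 1 ^ 2)) := by
    fun_prop
  have hT'meas : MeasurableSet {q : ℝ × (Fin 2 → ℝ) | q.1^2 + (q.2 0 ^ 2 + q.2 1 ^ 2) < 1 ∧
      t * Real.sqrt (q.1^2 + (q.2 0 ^ 2 + q.2 1 ^ 2)) < q.1} :=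
    (measurableSet_lt hq2 measurable_const).inter
      (measurableSet_lt (measurable_const.mul hq2.sqrt) measurable_fst)
  rw [Measure.prod_apply hT'meas]
  have hpre : ∀ z : ℝ, (Prod.mk z ⁻¹' {q : ℝ × (Fin 2 → ℝ) |
        q.1^2 + (q.2 0 ^ 2 + q.2 1 ^ 2) < 1 ∧
        t * Real.sqrt (q.1^2 + (q.2 0 ^ 2 + q.2 1 ^ 2)) < q.1})
      = {u : Fin 2 → ℝ | z^2 + (u 0 ^ 2 + u 1 ^ 2) < 1 ∧
          t * Real.sqrt (z^2 + (u 0 ^ 2 + u 1 ^ 2)) < z} := fun z => rfl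
  simp only [hpre]
  rcases lt_trichotomy t 0 with htneg | ht0 | htpos
  · -- t < 0
    have ht2 : t^2 ≤ 1 := by nlinarith
    have htsq : (0:ℝ) < t^2 := by nlinarith
    rw [← lintegral_add_compl (fun z : ℝ => volume {u : Fin 2 → ℝ |
        z^2 + (u 0 ^ 2 + u 1 ^ 2) < 1 ∧ t * Real.sqrt (z^2 + (u 0 ^ 2 + u 1 ^ 2)) < z})
        (measurableSet_Ioi (a := (0:ℝ))), Set.compl_Ioi]
    have hup : ∫⁻ z in Set.Ioi (0:ℝ), volume {u : Fin 2 → ℝ |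
          z^2 + (u 0 ^ 2 + u 1 ^ 2) < 1 ∧ t * Real.sqrt (z^2 + (u 0 ^ 2 + u 1 ^ 2)) < z}
        = ENNReal.ofReal (2/3 * Real.pi) := by
      rw [setLIntegral_congr_fun measurableSet_Ioi
        (fun z hz => ?_)]
      · exact lint_pos_part
      · have hz : (0:ℝ) < z := hz
        have hset : {u : Fin 2 → ℝ | z^2 + (u 0 ^ 2 + u 1 ^ 2) < 1 ∧
            t * Real.sqrt (z^2 + (u 0 ^ 2 + u 1 ^ 2)) < z}
            = {u : Fin 2 → ℝ | u 0 ^ 2 + u 1 ^ 2 < 1 - z^2} := by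
          ext u
          have h0 : (0:ℝ) ≤ u 0 ^ 2 + u 1 ^ 2 := by positivity
          have hc2 : t * Real.sqrt (z^2 + (u 0 ^ 2 + u 1 ^ 2)) ≤ 0 :=
            mul_nonpos_of_nonpos_of_nonneg htneg.le (Real.sqrt_nonneg _)
          simp only [Set.mem_setOf_eq]
          constructor
          · rintro ⟨h1, _⟩; linarith
          · intro h; exact ⟨by linarith, by linarith⟩
        rw [hset, disk_volume]
    have hdown : ∫⁻ z in Set.Iic (0:ℝ), volume {u : Fin 2 → ℝ |
          z^2 + (u 0 ^ 2 + u 1 ^ 2) < 1 ∧ t * Real.sqrt (z^2 + (u 0 ^ 2 + u 1 ^ 2)) < z}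
        = ENNReal.ofReal Real.pi * ENNReal.ofReal (-2*t/3) := by
      have hform : ∀ z ∈ Set.Iic (0:ℝ), volume {u : Fin 2 → ℝ |
            z^2 + (u 0 ^ 2 + u 1 ^ 2) < 1 ∧ t * Real.sqrt (z^2 + (u 0 ^ 2 + u 1 ^ 2)) < z}
          = ENNReal.ofReal Real.pi * ENNReal.ofReal (1 - z^2/t^2) := by
        intro z hz
        have hz : z ≤ 0 := hz
        have ha : 0 ≤ z^2/t^2 - z^2 := by
          have h1 : z^2 ≤ z^2 / t^2 := by
            rw [le_div_iff₀ htsq]; nlinarith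
          linarith
        have hset : {u : Fin 2 → ℝ | z^2 + (u 0 ^ 2 + u 1 ^ 2) < 1 ∧
            t * Real.sqrt (z^2 + (u 0 ^ 2 + u 1 ^ 2)) < z}
            = {u : Fin 2 → ℝ | z^2/t^2 - z^2 < u 0 ^ 2 + u 1 ^ 2 ∧
                u 0 ^ 2 + u 1 ^ 2 < 1 - z^2} := by
          ext u
          have h0 : (0:ℝ) ≤ u 0 ^ 2 + u 1 ^ 2 := by positivity
          have hzt : 0 ≤ z / t := by
            rw [div_nonneg_iff]; right; exact ⟨hz, htneg.le⟩
          have hc2 : (t * Real.sqrt (z^2 + (u 0 ^ 2 + u 1 ^ 2)) < z)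
              ↔ (z^2/t^2 - z^2 < u 0 ^ 2 + u 1 ^ 2) := by
            rw [show t * Real.sqrt (z^2 + (u 0 ^ 2 + u 1 ^ 2))
                = Real.sqrt (z^2 + (u 0 ^ 2 + u 1 ^ 2)) * t from mul_comm _ _,
              ← div_lt_iff_of_neg htneg, Real.lt_sqrt hzt, div_pow]
            constructor <;> intro h <;> linarith
          simp only [Set.mem_setOf_eq, hc2]
          constructor
          · rintro ⟨h1, h2⟩; exact ⟨h2, by linarith⟩
          · rintro ⟨h1, h2⟩; exact ⟨by linarith, h1⟩
        rw [hset, annulus_volume _ _ ha]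
        congr 1
        congr 1
        ring
      rw [setLIntegral_congr_fun measurableSet_Iic hform]
      rw [← Set.Iic_union_Ioc_eq_Iic htneg.le,
        lintegral_union measurableSet_Ioc
          (by rw [Set.disjoint_left]; intro z hz1 hz2; exact absurd hz2.1 (not_lt.2 hz1))]
      have hzero : ∫⁻ z in Set.Iic t, ENNReal.ofReal Real.pi * ENNReal.ofReal (1 - z^2/t^2)
          = 0 :=
        lintegral_zero_piece measurableSet_Iic (fun z hz => by
          have hz : z ≤ t := hz
          have : 1 - z^2/t^2 ≤ 0 := by
            have : (1:ℝ) ≤ z^2/t^2 := by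
              rw [le_div_iff₀ htsq]; nlinarith
            linarith
          rw [show ENNReal.ofReal (1 - z^2/t^2) = 0 from ENNReal.ofReal_eq_zero.2 this,
            mul_zero])
      rw [hzero, zero_add, lintegral_const_mul' _ _ ENNReal.ofReal_ne_top,
        lintegral_piece htneg.le (by fun_prop) (fun z hz => by
          have h1 : z^2 ≤ t^2 := by nlinarith [hz.1, hz.2]
          have : z^2/t^2 ≤ 1 := by
            rw [div_le_one htsq]; exact h1
          linarith)]
      congr 2
      have hti : ∫ z in t..0, (1 - z^2/t^2)
          = (∫ z in t..0, (1:ℝ)) - (∫ z in t..0, z^2)/t^2 := by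
        rw [← intervalIntegral.integral_div, intervalIntegral.integral_sub
          intervalIntegrable_const ((intervalIntegral.intervalIntegrable_pow 2).div_const _)]
      rw [hti, intervalIntegral.integral_const, integral_pow]
      have ht0 : t ≠ 0 := htneg.ne
      field_simp
      ring
    rw [hup, hdown, ← ENNReal.ofReal_mul Real.pi_pos.le, ← ENNReal.ofReal_add (by positivity)
      (by nlinarith [Real.pi_pos])]
    congr 1
    ring
  · -- t = 0
    subst ht0
    have hsl : ∀ z : ℝ, volume {u : Fin 2 → ℝ |
          z^2 + (u 0 ^ 2 + u 1 ^ 2) < 1 ∧ 0 * Real.sqrt (z^2 + (u 0 ^ 2 + u 1 ^ 2)) < z}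
        = Set.indicator (Set.Ioi (0:ℝ))
            (fun z => ENNReal.ofReal Real.pi * ENNReal.ofReal (1 - z^2)) z := by
      intro z
      rcases lt_or_ge 0 z with hz | hz
      · rw [Set.indicator_of_mem (Set.mem_Ioi.mpr hz)]
        have hset : {u : Fin 2 → ℝ | z^2 + (u 0 ^ 2 + u 1 ^ 2) < 1 ∧
            0 * Real.sqrt (z^2 + (u 0 ^ 2 + u 1 ^ 2)) < z}
            = {u : Fin 2 → ℝ | u 0 ^ 2 + u 1 ^ 2 < 1 - z^2} := by
          ext u
          simp only [Set.mem_setOf_eq, zero_mul]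
          constructor
          · rintro ⟨h1, _⟩; linarith
          · intro h; exact ⟨by linarith, hz⟩
        rw [hset, disk_volume]
      · rw [Set.indicator_of_notMem (fun hm => (not_lt.2 hz) (Set.mem_Ioi.mp hm))]
        have hset : {u : Fin 2 → ℝ | z^2 + (u 0 ^ 2 + u 1 ^ 2) < 1 ∧
            0 * Real.sqrt (z^2 + (u 0 ^ 2 + u 1 ^ 2)) < z} = ∅ := by
          ext u
          simp only [Set.mem_setOf_eq, zero_mul, Set.mem_empty_iff_false, iff_false, not_and,
            not_lt]
          intro _; exact hz
        rw [hset, measure_empty]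
    rw [lintegral_congr hsl, lintegral_indicator measurableSet_Ioi, lint_pos_part]
    congr 1
    ring
  · -- t > 0
    have ht2 : t^2 ≤ 1 := by nlinarith
    have hsl : ∀ z : ℝ, volume {u : Fin 2 → ℝ |
          z^2 + (u 0 ^ 2 + u 1 ^ 2) < 1 ∧ t * Real.sqrt (z^2 + (u 0 ^ 2 + u 1 ^ 2)) < z}
        = Set.indicator (Set.Ioi (0:ℝ)) (fun z => ENNReal.ofReal Real.pi *
            ENNReal.ofReal (min (1 - z^2) (z^2/t^2 - z^2))) z := by
      intro z
      rcases lt_or_ge 0 z with hz | hz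
      · rw [Set.indicator_of_mem (Set.mem_Ioi.mpr hz)]
        have hset : {u : Fin 2 → ℝ | z^2 + (u 0 ^ 2 + u 1 ^ 2) < 1 ∧
            t * Real.sqrt (z^2 + (u 0 ^ 2 + u 1 ^ 2)) < z}
            = {u : Fin 2 → ℝ | u 0 ^ 2 + u 1 ^ 2 < min (1 - z^2) (z^2/t^2 - z^2)} := by
          ext u
          have h0 : (0:ℝ) ≤ u 0 ^ 2 + u 1 ^ 2 := by positivity
          have hc2 : (t * Real.sqrt (z^2 + (u 0 ^ 2 + u 1 ^ 2)) < z)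
              ↔ (u 0 ^ 2 + u 1 ^ 2 < z^2/t^2 - z^2) := by
            rw [show t * Real.sqrt (z^2 + (u 0 ^ 2 + u 1 ^ 2))
                = Real.sqrt (z^2 + (u 0 ^ 2 + u 1 ^ 2)) * t from mul_comm _ _,
              ← lt_div_iff₀ htpos, Real.sqrt_lt' (by positivity), div_pow]
            constructor <;> intro h <;> linarith
          simp only [Set.mem_setOf_eq, hc2, lt_min_iff]
          constructor
          · rintro ⟨h1, h2⟩; exact ⟨by linarith, h2⟩
          · rintro ⟨h1, h2⟩; exact ⟨by linarith, h2⟩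
        rw [hset, disk_volume]
      · rw [Set.indicator_of_notMem (fun hm => (not_lt.2 hz) (Set.mem_Ioi.mp hm))]
        have hset : {u : Fin 2 → ℝ | z^2 + (u 0 ^ 2 + u 1 ^ 2) < 1 ∧
            t * Real.sqrt (z^2 + (u 0 ^ 2 + u 1 ^ 2)) < z} = ∅ := by
          ext u
          simp only [Set.mem_setOf_eq, Set.mem_empty_iff_false, iff_false, not_and, not_lt]
          intro _
          exact le_trans hz (mul_nonneg htpos.le (Real.sqrt_nonneg _))
        rw [hset, measure_empty]
    rw [lintegral_congr hsl, lintegral_indicator measurableSet_Ioi,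
      lintegral_const_mul' _ _ ENNReal.ofReal_ne_top]
    rw [← Set.Ioc_union_Ioi_eq_Ioi htpos.le,
      lintegral_union measurableSet_Ioi
        (by rw [Set.disjoint_left]; intro z hz1 hz2; exact absurd hz2 (not_lt.2 hz1.2)),
      ← Set.Ioc_union_Ioi_eq_Ioi hm2,
      lintegral_union measurableSet_Ioi
        (by rw [Set.disjoint_left]; intro z hz1 hz2; exact absurd hz2 (not_lt.2 hz1.2))]
    have hpc1 : ∫⁻ z in Set.Ioc 0 t, ENNReal.ofReal (min (1 - z^2) (z^2/t^2 - z^2))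
        = ENNReal.ofReal (t/3 - t^3/3) := by
      rw [setLIntegral_congr_fun measurableSet_Ioc (
        (fun z hz => by
          rw [min_eq_right]
          have h1 : z^2 ≤ t^2 := by nlinarith [hz.1, hz.2]
          have h2 : z^2/t^2 ≤ 1 := by rw [div_le_one (by positivity)]; exact h1
          linarith)),
        lintegral_piece htpos.le (by fun_prop) (fun z hz => by
          have h1 : z^2 ≤ z^2/t^2 := by rw [le_div_iff₀ (by positivity)]; nlinarith
          linarith)]
      congr 1
      have hti : ∫ z in (0:ℝ)..t, (z^2/t^2 - z^2)
          = (∫ z in (0:ℝ)..t, z^2)/t^2 - ∫ z in (0:ℝ)..t, z^2 := by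
        rw [← intervalIntegral.integral_div, intervalIntegral.integral_sub
          ((intervalIntegral.intervalIntegrable_pow 2).div_const _)
          (intervalIntegral.intervalIntegrable_pow 2)]
      rw [hti, integral_pow]
      have ht0 : t ≠ 0 := htpos.ne'
      field_simp
      ring
    have hpc2 : ∫⁻ z in Set.Ioc t 1, ENNReal.ofReal (min (1 - z^2) (z^2/t^2 - z^2))
        = ENNReal.ofReal (2/3 - t + t^3/3) := by
      rw [setLIntegral_congr_fun measurableSet_Ioc (
        (fun z hz => by
          rw [min_eq_left]
          have h1 : t^2 ≤ z^2 := by nlinarith [hz.1, hz.2, htpos]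
          have h2 : (1:ℝ) ≤ z^2/t^2 := by rw [le_div_iff₀ (by positivity)]; nlinarith
          linarith)),
        lintegral_piece hm2 (by continuity) (fun z hz => by nlinarith [hz.1, hz.2, htpos])]
      congr 1
      rw [intervalIntegral.integral_sub intervalIntegrable_const
        (intervalIntegral.intervalIntegrable_pow 2), intervalIntegral.integral_const,
        integral_pow]
      norm_num
      ring
    have hpc3 : ∫⁻ z in Set.Ioi (1:ℝ), ENNReal.ofReal (min (1 - z^2) (z^2/t^2 - z^2)) = 0 :=
      lintegral_zero_piece measurableSet_Ioi (fun z hz => by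
        refine ENNReal.ofReal_eq_zero.2 (le_trans (min_le_left _ _) ?_)
        nlinarith [Set.mem_Ioi.mp hz])
    rw [hpc1, hpc2, hpc3, add_zero, ← ENNReal.ofReal_add (by nlinarith)
      (by nlinarith [mul_nonneg (sq_nonneg (1 - t)) (by linarith : (0:ℝ) ≤ t + 2)]),
      ← ENNReal.ofReal_mul Real.pi_pos.le]
    congr 1
    ring

lemma cone_volume_euclidean (t : ℝ) (ht : t ∈ Set.Icc (-1:ℝ) 1) :
    volume {v : E3 | ‖v‖ < 1 ∧ t * ‖v‖ < v 0}
      = ENNReal.ofReal (2/3 * Real.pi * (1 - t)) := by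
  classical
  set T' : Set (ℝ × (Fin 2 → ℝ)) := {q : ℝ × (Fin 2 → ℝ) |
      q.1^2 + (q.2 0 ^ 2 + q.2 1 ^ 2) < 1 ∧
      t * Real.sqrt (q.1^2 + (q.2 0 ^ 2 + q.2 1 ^ 2)) < q.1} with hT'
  have hq2 : Measurable (fun q : ℝ × (Fin 2 → ℝ) => q.1^2 + (q.2 0 ^ 2 + q.2 1 ^ 2)) := by
    fun_prop
  have hT'meas : MeasurableSet T' := by
    exact (measurableSet_lt hq2 measurable_const).inter
      (measurableSet_lt (measurable_const.mul hq2.sqrt) measurable_fst)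
  -- step 2 : pi to prod
  have hpi : volume {u : Fin 3 → ℝ |
        Real.sqrt (u 0 ^ 2 + (u 1 ^ 2 + u 2 ^ 2)) < 1 ∧
        t * Real.sqrt (u 0 ^ 2 + (u 1 ^ 2 + u 2 ^ 2)) < u 0}
      = (volume.prod (volume : Measure (Fin 2 → ℝ))) T' := by
    have hmp : MeasurePreserving (MeasurableEquiv.piFinSuccAbove (fun _ : Fin 3 => ℝ) 0)
        volume (volume.prod (volume : Measure (Fin 2 → ℝ))) := by
      have := MeasureTheory.measurePreserving_piFinSuccAbove (fun _ : Fin 3 => (volume : Measure ℝ)) 0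
      simpa [MeasureTheory.volume_pi] using this
    rw [← hmp.measure_preimage hT'meas.nullMeasurableSet]
    congr 1
    ext u
    have happ : (MeasurableEquiv.piFinSuccAbove (fun _ : Fin 3 => ℝ) 0) u
        = (u 0, fun j : Fin 2 => u ((0 : Fin 3).succAbove j)) := rfl
    have h1 : (0 : Fin 3).succAbove 0 = 1 := rfl
    have h2 : (0 : Fin 3).succAbove 1 = 2 := rfl
    simp only [Set.mem_preimage, happ, hT', Set.mem_setOf_eq, h1, h2]
    have h0 : (0:ℝ) ≤ u 0 ^ 2 + (u 1 ^ 2 + u 2 ^ 2) := by positivity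
    rw [Real.sqrt_lt' one_pos, one_pow]
  rw [show {v : E3 | ‖v‖ < 1 ∧ t * ‖v‖ < v 0}
      = (MeasurableEquiv.toLp 2 (Fin 3 → ℝ)).symm ⁻¹' {u : Fin 3 → ℝ |
          Real.sqrt (u 0 ^ 2 + (u 1 ^ 2 + u 2 ^ 2)) < 1 ∧
          t * Real.sqrt (u 0 ^ 2 + (u 1 ^ 2 + u 2 ^ 2)) < u 0} from ?_,
    (EuclideanSpace.volume_preserving_symm_measurableEquiv_toLp (Fin 3)).measure_preimage ?_,
    hpi, cone_prod_volume t ht]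
  · apply MeasurableSet.nullMeasurableSet
    have hm : Measurable (fun u : Fin 3 → ℝ =>
        Real.sqrt (u 0 ^ 2 + (u 1 ^ 2 + u 2 ^ 2))) := by fun_prop
    exact (measurableSet_lt hm measurable_const).inter
      (measurableSet_lt (measurable_const.mul hm) (measurable_pi_apply 0))
  · ext v
    have hnorm : ‖v‖ = Real.sqrt (v 0 ^ 2 + (v 1 ^ 2 + v 2 ^ 2)) := by
      rw [EuclideanSpace.norm_eq]
      congr 1
      rw [Fin.sum_univ_three]
      simp [sq_abs]
      ring
    have happ : ∀ i, (MeasurableEquiv.toLp 2 (Fin 3 → ℝ)).symm v i = v i := fun _ => rfl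
    simp only [Set.mem_preimage, Set.mem_setOf_eq, happ, hnorm]


lemma cone_volume (x : E3) (hx : ‖x‖ = 1) (t : ℝ) (ht : t ∈ Set.Icc (-1:ℝ) 1) :
    volume {y : E3 | ‖y‖ < 1 ∧ t * ‖y‖ < ⟪x, y⟫}
      = ENNReal.ofReal (2/3 * Real.pi * (1 - t)) := by
  have hcard : Module.finrank ℝ E3 = Fintype.card (Fin 3) := by
    simp [finrank_euclideanSpace]
  have horth : Orthonormal ℝ (Set.restrict {(0 : Fin 3)} (fun _ : Fin 3 => x)) := by
    constructor
    · intro i; exact hx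
    · intro i j hij
      exfalso
      apply hij
      apply Subtype.ext
      have hi := i.2
      have hj := j.2
      simp only [Set.mem_singleton_iff] at hi hj
      rw [hi, hj]
  obtain ⟨b, hb⟩ := horth.exists_orthonormalBasis_extension_of_card_eq hcard
  have hb0 : b 0 = x := hb 0 rfl
  have hset : {y : E3 | ‖y‖ < 1 ∧ t * ‖y‖ < ⟪x, y⟫}
      = b.repr ⁻¹' {v : E3 | ‖v‖ < 1 ∧ t * ‖v‖ < v 0} := by
    ext y
    have h1 : ‖b.repr y‖ = ‖y‖ := b.repr.norm_map y
    have h2 : (b.repr y) 0 = ⟪x, y⟫ := by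
      rw [b.repr_apply_apply, hb0]
    simp only [Set.mem_setOf_eq, Set.mem_preimage, h1, h2]
  have hmeas : MeasurableSet {v : E3 | ‖v‖ < 1 ∧ t * ‖v‖ < v 0} := by
    have h1 : Measurable fun v : E3 => ‖v‖ := measurable_norm
    have h2 : Measurable fun v : E3 => v 0 := by
      exact (measurable_pi_apply 0).comp (MeasurableEquiv.toLp 2 (Fin 3 → ℝ)).symm.measurable
    exact (measurableSet_lt h1 measurable_const).inter
      (measurableSet_lt (measurable_const.mul h1) h2)
  rw [hset, b.measurePreserving_repr.measure_preimage hmeas.nullMeasurableSet]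
  exact cone_volume_euclidean t ht

lemma smul_cap (x : E3) (t : ℝ) :
    Set.Ioo (0:ℝ) 1 • (Subtype.val '' {w : S2 | t < ⟪x, (w:E3)⟫})
      = {y : E3 | ‖y‖ < 1 ∧ t * ‖y‖ < ⟪x, y⟫} := by
  ext y
  constructor
  · rintro ⟨r, hr, -, ⟨w, hw, rfl⟩, rfl⟩
    obtain ⟨hr0, hr1⟩ := hr
    have hwn : ‖(w : E3)‖ = 1 := by
      have := w.2
      rwa [mem_sphere_zero_iff_norm] at this
    have hnorm : ‖r • (w : E3)‖ = r := by
      rw [norm_smul, hwn, mul_one, Real.norm_eq_abs, abs_of_pos hr0]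
    refine ⟨by rw [hnorm]; exact hr1, ?_⟩
    rw [hnorm, real_inner_smul_right, mul_comm t r]
    exact (mul_lt_mul_iff_right₀ hr0).2 hw
  · rintro ⟨h1, h2⟩
    have hy0 : y ≠ 0 := by
      rintro rfl
      simp at h2
    have hyn : 0 < ‖y‖ := norm_pos_iff.2 hy0
    have hwmem : (‖y‖⁻¹ • y) ∈ sphere (0 : E3) 1 := by
      rw [mem_sphere_zero_iff_norm, norm_smul, norm_inv, norm_norm, inv_mul_cancel₀ hyn.ne']
    refine ⟨‖y‖, ⟨hyn, h1⟩, ‖y‖⁻¹ • y, ⟨⟨‖y‖⁻¹ • y, hwmem⟩, ?_, rfl⟩, ?_⟩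
    · show t < ⟪x, ‖y‖⁻¹ • y⟫
      rw [real_inner_smul_right]
      rw [lt_inv_mul_iff₀ hyn]
      linarith [h2]
    · show ‖y‖ • (‖y‖⁻¹ • y) = y
      rw [smul_inv_smul₀ hyn.ne']

lemma cap_measurable (x : E3) (t : ℝ) : MeasurableSet {w : S2 | t < ⟪x, (w:E3)⟫} := by
  have : Continuous fun w : S2 => ⟪x, (w:E3)⟫ := by
    exact Continuous.inner continuous_const continuous_subtype_val
  exact measurableSet_lt measurable_const this.measurable

lemma toSphere_univ :
    (volume : Measure E3).toSphere Set.univ = ENNReal.ofReal (4 * Real.pi) := by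
  rw [Measure.toSphere_apply_univ, volume_ball_E3]
  have : (Module.finrank ℝ E3 : ℝ≥0∞) = ((3:ℕ) : ℝ≥0∞) := by
    norm_cast
    simp [finrank_euclideanSpace]
  rw [this, show ((3:ℕ) : ℝ≥0∞) = ENNReal.ofReal 3 by simp, ← ENNReal.ofReal_mul (by norm_num)]
  congr 1
  ring

lemma cap_measure (x : E3) (hx : ‖x‖ = 1) (t : ℝ) (ht : t ∈ Set.Icc (-1:ℝ) 1) :
    sigmaSphere {w : S2 | t < ⟪x, (w:E3)⟫} = ENNReal.ofReal ((1 - t)/2) := by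
  rw [sigmaSphere, Measure.smul_apply, smul_eq_mul]
  rw [Measure.toSphere_apply' _ (cap_measurable x t), smul_cap x t, cone_volume x hx t ht,
    toSphere_univ]
  have hdim : (Module.finrank ℝ E3 : ℝ≥0∞) = ENNReal.ofReal 3 := by
    rw [show Module.finrank ℝ E3 = 3 by simp [finrank_euclideanSpace]]
    simp
  rw [hdim, ← ENNReal.ofReal_mul (by norm_num)]
  have hval : (3 : ℝ) * (2/3 * Real.pi * (1 - t)) = (4 * Real.pi) * ((1 - t)/2) := by ring
  rw [hval, show ENNReal.ofReal (4 * Real.pi * ((1 - t) / 2))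
      = ENNReal.ofReal (4 * Real.pi) * ENNReal.ofReal ((1 - t) / 2) from
      ENNReal.ofReal_mul (by positivity), ← mul_assoc,
    ENNReal.inv_mul_cancel (ne_of_gt (ENNReal.ofReal_pos.2 (by positivity)))
      ENNReal.ofReal_ne_top, one_mul]

instance : IsProbabilityMeasure sigmaSphere := by
  constructor
  rw [sigmaSphere, Measure.smul_apply, smul_eq_mul, toSphere_univ]
  exact ENNReal.inv_mul_cancel (ne_of_gt (ENNReal.ofReal_pos.2 (by positivity)))
    ENNReal.ofReal_ne_top

lemma inner_abs_le (x : E3) (hx : ‖x‖ = 1) (w : S2) : |⟪x, (w:E3)⟫| ≤ 1 := by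
  have hwn : ‖(w : E3)‖ = 1 := by
    have := w.2
    rwa [mem_sphere_zero_iff_norm] at this
  calc |⟪x, (w:E3)⟫| ≤ ‖x‖ * ‖(w:E3)‖ := abs_real_inner_le_norm x (w:E3)
    _ = 1 := by rw [hx, hwn, mul_one]

lemma inner_measurable (x : E3) : Measurable fun w : S2 => ⟪x, (w:E3)⟫ :=
  (Continuous.inner continuous_const continuous_subtype_val).measurable

lemma map_inner (x : E3) (hx : ‖x‖ = 1) :
    Measure.map (fun w : S2 => ⟪x, (w:E3)⟫) sigmaSphere
      = (ENNReal.ofReal 2)⁻¹ • (volume.restrict (Set.Ioc (-1:ℝ) 1)) := by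
  have h2ne : (ENNReal.ofReal 2) ≠ 0 := ne_of_gt (ENNReal.ofReal_pos.2 (by norm_num))
  haveI : IsFiniteMeasure (Measure.map (fun w : S2 => ⟪x, (w:E3)⟫) sigmaSphere) :=
    Measure.isFiniteMeasure_map _ _
  refine Measure.ext_of_Iic _ _ (fun b => ?_)
  rw [Measure.map_apply (inner_measurable x) measurableSet_Iic]
  have hpre : (fun w : S2 => ⟪x, (w:E3)⟫) ⁻¹' Set.Iic b
      = {w : S2 | b < ⟪x, (w:E3)⟫}ᶜ := by
    ext w
    simp [not_lt]
  rw [hpre, measure_compl (cap_measurable x b) (measure_ne_top _ _), measure_univ,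
    Measure.smul_apply, Measure.restrict_apply measurableSet_Iic, smul_eq_mul]
  rcases lt_or_ge b (-1) with hb | hb
  · have hcap : {w : S2 | b < ⟪x, (w:E3)⟫} = Set.univ := by
      ext w
      simp only [Set.mem_setOf_eq, Set.mem_univ, iff_true]
      have := (abs_le.1 (inner_abs_le x hx w)).1
      linarith
    have hint : Set.Iic b ∩ Set.Ioc (-1:ℝ) 1 = ∅ := by
      ext z
      simp only [Set.mem_inter_iff, Set.mem_Iic, Set.mem_Ioc, Set.mem_empty_iff_false,
        iff_false, not_and]
      intro h1 h2
      linarith [h2]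
    rw [hcap, measure_univ, tsub_self, hint, measure_empty, mul_zero]
  · rcases le_or_gt b 1 with hb1 | hb1
    · rw [cap_measure x hx b ⟨hb, hb1⟩]
      have hint : Set.Iic b ∩ Set.Ioc (-1:ℝ) 1 = Set.Ioc (-1) b := by
        ext z
        simp only [Set.mem_inter_iff, Set.mem_Iic, Set.mem_Ioc]
        constructor
        · rintro ⟨h1, h2, h3⟩; exact ⟨h2, h1⟩
        · rintro ⟨h1, h2⟩; exact ⟨h2, h1, by linarith⟩
      rw [hint, Real.volume_Ioc,
        show b - (-1) = 2 * ((1 + b)/2) by ring,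
        ENNReal.ofReal_mul (by norm_num), ← mul_assoc,
        ENNReal.inv_mul_cancel h2ne ENNReal.ofReal_ne_top, one_mul,
        ← ENNReal.ofReal_one, ← ENNReal.ofReal_sub _ (by linarith : (0:ℝ) ≤ (1 - b)/2)]
      congr 1
      ring
    · have hcap : {w : S2 | b < ⟪x, (w:E3)⟫} = ∅ := by
        ext w
        simp only [Set.mem_setOf_eq, Set.mem_empty_iff_false, iff_false, not_lt]
        have := (abs_le.1 (inner_abs_le x hx w)).2
        linarith
      have hint : Set.Iic b ∩ Set.Ioc (-1:ℝ) 1 = Set.Ioc (-1) 1 := by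
        rw [Set.inter_eq_right]
        intro z hz
        exact le_trans hz.2 (by linarith)
      rw [hcap, measure_empty, tsub_zero, hint, Real.volume_Ioc,
        show (1:ℝ) - (-1) = 2 by norm_num,
        ENNReal.inv_mul_cancel h2ne ENNReal.ofReal_ne_top]

lemma integral_inner_comp (x : E3) (hx : ‖x‖ = 1) (f : ℝ → ℝ) (hf : Continuous f) :
    ∫ w, f ⟪x, (w:E3)⟫ ∂sigmaSphere = (∫ s in (-1:ℝ)..1, f s) / 2 := by
  have hmap := map_inner x hx
  have : ∫ w, f ⟪x, (w:E3)⟫ ∂sigmaSphere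
      = ∫ s, f s ∂(Measure.map (fun w : S2 => ⟪x, (w:E3)⟫) sigmaSphere) := by
    rw [integral_map (inner_measurable x).aemeasurable hf.aestronglyMeasurable]
  rw [this, hmap, integral_smul_measure, intervalIntegral.integral_of_le (by norm_num : (-1:ℝ) ≤ 1)]
  rw [ENNReal.toReal_inv, ENNReal.toReal_ofReal (by norm_num)]
  rw [smul_eq_mul]
  ring

lemma integrable_of_bounded {f : S2 → ℝ} (hm : AEStronglyMeasurable f sigmaSphere)
    (C : ℝ) (h : ∀ w, |f w| ≤ C) : Integrable f sigmaSphere :=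
  Integrable.mono' (integrable_const C) hm
    (Filter.Eventually.of_forall (fun w => by simpa [Real.norm_eq_abs] using h w))

lemma integral_abs_id : ∫ s in (-1:ℝ)..1, |s| = 1 := by
  have h1 : ∫ s in (-1:ℝ)..0, |s| = 1/2 := by
    rw [intervalIntegral.integral_congr (g := fun s : ℝ => -s)
      (fun s hs => by
        rw [Set.uIcc_of_le (by norm_num : (-1:ℝ) ≤ 0)] at hs
        exact abs_of_nonpos hs.2),
      intervalIntegral.integral_neg, integral_id]
    norm_num
  have h2 : ∫ s in (0:ℝ)..1, |s| = 1/2 := by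
    rw [intervalIntegral.integral_congr (g := fun s : ℝ => s)
      (fun s hs => by
        rw [Set.uIcc_of_le (by norm_num : (0:ℝ) ≤ 1)] at hs
        exact abs_of_nonneg hs.1),
      integral_id]
    norm_num
  rw [← intervalIntegral.integral_add_adjacent_intervals (a := (-1:ℝ)) (b := 0) (c := 1)
    (continuous_abs.intervalIntegrable _ _) (continuous_abs.intervalIntegrable _ _), h1, h2]
  norm_num

lemma integral_poly : ∫ t in (-1:ℝ)..1, ((1-t)/2)^2 = 2/3 := by
  have hfun : (fun t : ℝ => ((1-t)/2)^2) = fun t : ℝ => 1/4 - t/2 + t^2/4 := by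
    funext t; ring
  have i2 : ∫ t in (-1:ℝ)..1, t/2 = 0 := by
    rw [intervalIntegral.integral_div, integral_id]; norm_num
  have i3 : ∫ t in (-1:ℝ)..1, t^2/4 = 1/6 := by
    rw [intervalIntegral.integral_div, integral_pow]; norm_num
  rw [hfun, intervalIntegral.integral_add
      ((intervalIntegrable_const).sub (intervalIntegral.intervalIntegrable_id.div_const 2))
      ((intervalIntegral.intervalIntegrable_pow 2).div_const 4),
    intervalIntegral.integral_sub intervalIntegrable_const
      (intervalIntegral.intervalIntegrable_id.div_const 2),
    i2, i3, intervalIntegral.integral_const]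
  norm_num

lemma integral_sqrt_two_sub : ∫ s in (-1:ℝ)..1, Real.sqrt (2 - 2*s) = 8/3 := by
  have hfun : ∀ s ∈ Set.uIcc (-1:ℝ) 1, Real.sqrt (2 - 2*s) = Real.sqrt 2 * Real.sqrt (1 - s) := by
    intro s _
    rw [← Real.sqrt_mul (by norm_num : (0:ℝ) ≤ 2)]
    congr 1
    ring
  rw [intervalIntegral.integral_congr hfun, intervalIntegral.integral_const_mul,
    show (fun s : ℝ => Real.sqrt (1 - s)) = fun s : ℝ => Real.sqrt (1 - s) from rfl]
  have hsub : ∫ s in (-1:ℝ)..1, Real.sqrt (1 - s) = ∫ x in (0:ℝ)..2, Real.sqrt x := by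
    have := intervalIntegral.integral_comp_sub_left (a := (-1:ℝ)) (b := 1)
      (fun x => Real.sqrt x) 1
    rw [show (1:ℝ) - 1 = 0 by norm_num, show (1:ℝ) - -1 = 2 by norm_num] at this
    exact this
  rw [hsub]
  have hrpow : ∫ x in (0:ℝ)..2, Real.sqrt x = ∫ x in (0:ℝ)..2, x ^ ((1:ℝ)/2) := by
    apply intervalIntegral.integral_congr
    intro x hx
    rw [Set.uIcc_of_le (by norm_num : (0:ℝ) ≤ 2)] at hx
    exact Real.sqrt_eq_rpow x
  rw [hrpow, integral_rpow (Or.inl (by norm_num))]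
  have h32 : ((1:ℝ)/2 + 1) = 3/2 := by norm_num
  rw [h32]
  have h2pow : (2:ℝ) ^ ((3:ℝ)/2) = 2 * Real.sqrt 2 := by
    rw [show (3:ℝ)/2 = 1 + 1/2 by norm_num, Real.rpow_add (by norm_num), Real.rpow_one,
      ← Real.sqrt_eq_rpow]
  rw [h2pow, Real.zero_rpow (by norm_num)]
  have hs2 : Real.sqrt 2 * Real.sqrt 2 = 2 := Real.mul_self_sqrt (by norm_num)
  field_simp
  nlinarith [hs2]

lemma integral_inner_zero (x : E3) (hx : ‖x‖ = 1) :
    ∫ w, ⟪x, (w:E3)⟫ ∂sigmaSphere = 0 := by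
  rw [show (fun w : S2 => ⟪x, (w:E3)⟫) = fun w : S2 => id ⟪x, (w:E3)⟫ from rfl,
    integral_inner_comp x hx id continuous_id]
  rw [show (fun s : ℝ => id s) = fun s : ℝ => s from rfl]
  rw [integral_id]
  norm_num

lemma integral_inner_abs (x : E3) (hx : ‖x‖ = 1) :
    ∫ w, |⟪x, (w:E3)⟫| ∂sigmaSphere = 1/2 := by
  rw [integral_inner_comp x hx (fun s => |s|) continuous_abs, integral_abs_id]

lemma min_integral (x y : E3) (hx : ‖x‖ = 1) (hy : ‖y‖ = 1) :
    ∫ w, (min ⟪x, (w:E3)⟫ ⟪y, (w:E3)⟫ + 1) ∂sigmaSphere = 1 - ‖x - y‖/4 := by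
  have habs : ∫ w, |⟪x - y, (w:E3)⟫| ∂sigmaSphere = ‖x - y‖/2 := by
    rcases eq_or_ne x y with rfl | hne
    · simp
    · have hne' : x - y ≠ 0 := sub_ne_zero.2 hne
      have hnn : ‖x - y‖ ≠ 0 := norm_ne_zero_iff.2 hne'
      set u := (‖x - y‖⁻¹ : ℝ) • (x - y) with hu_def
      have hun : ‖u‖ = 1 := norm_smul_inv_norm hne'
      have hrw : ∀ w : S2, |⟪x - y, (w:E3)⟫| = ‖x - y‖ * |⟪u, (w:E3)⟫| := by
        intro w
        rw [hu_def, real_inner_smul_left, abs_mul, abs_inv, abs_norm, ← mul_assoc,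
          mul_inv_cancel₀ hnn, one_mul]
      rw [integral_congr_ae (Filter.Eventually.of_forall hrw), integral_const_mul,
        integral_inner_abs u hun]
      ring
  have hmin : ∀ w : S2, min ⟪x, (w:E3)⟫ ⟪y, (w:E3)⟫ + 1
      = ((⟪x, (w:E3)⟫ + ⟪y, (w:E3)⟫ - |⟪x - y, (w:E3)⟫|)/2) + 1 := by
    intro w
    rw [inner_sub_left]
    rcases le_total (⟪x, (w:E3)⟫ : ℝ) ⟪y, (w:E3)⟫ with h | h
    · rw [min_eq_left h, abs_of_nonpos (by linarith)]; ring
    · rw [min_eq_right h, abs_of_nonneg (by linarith)]; ring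
  have hIx : Integrable (fun w : S2 => ⟪x, (w:E3)⟫) sigmaSphere :=
    integrable_of_bounded (inner_measurable x).aestronglyMeasurable 1
      (fun w => inner_abs_le x hx w)
  have hIy : Integrable (fun w : S2 => ⟪y, (w:E3)⟫) sigmaSphere :=
    integrable_of_bounded (inner_measurable y).aestronglyMeasurable 1
      (fun w => inner_abs_le y hy w)
  have hIa : Integrable (fun w : S2 => |⟪x - y, (w:E3)⟫|) sigmaSphere := by
    apply integrable_of_bounded ((inner_measurable (x - y)).abs.aestronglyMeasurable) 2
    intro w
    rw [abs_abs]
    calc |⟪x - y, (w:E3)⟫| = |⟪x, (w:E3)⟫ - ⟪y, (w:E3)⟫| := by rw [inner_sub_left]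
      _ ≤ |⟪x, (w:E3)⟫| + |⟪y, (w:E3)⟫| := abs_sub _ _
      _ ≤ 2 := by linarith [inner_abs_le x hx w, inner_abs_le y hy w]
  have hsum2 : Integrable (fun w : S2 => ⟪x, (w:E3)⟫ + ⟪y, (w:E3)⟫) sigmaSphere :=
    hIx.add hIy
  have hsum3 : Integrable
      (fun w : S2 => ⟪x, (w:E3)⟫ + ⟪y, (w:E3)⟫ - |⟪x - y, (w:E3)⟫|) sigmaSphere :=
    hsum2.sub hIa
  have hsum4 : Integrable
      (fun w : S2 => (⟪x, (w:E3)⟫ + ⟪y, (w:E3)⟫ - |⟪x - y, (w:E3)⟫|)/2) sigmaSphere :=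
    hsum3.div_const 2
  rw [integral_congr_ae (Filter.Eventually.of_forall hmin)]
  rw [integral_add hsum4 (integrable_const 1),
    integral_div, integral_sub hsum2 hIa, integral_add hIx hIy,
    integral_inner_zero x hx, integral_inner_zero y hy, habs, integral_const]
  simp [measure_univ]
  ring

lemma ite_eq_indicator (x : E3) (t : ℝ) :
    (fun w : S2 => if t < ⟪x, (w:E3)⟫ then (1:ℝ) else 0)
      = Set.indicator {w : S2 | t < ⟪x, (w:E3)⟫} (fun _ => 1) := by
  funext w
  simp only [Set.indicator_apply, Set.mem_setOf_eq]

lemma ite2_eq_indicator (x y : E3) (t : ℝ) :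
    (fun w : S2 => (if t < ⟪x, (w:E3)⟫ then (1:ℝ) else 0) *
        (if t < ⟪y, (w:E3)⟫ then (1:ℝ) else 0))
      = Set.indicator ({w : S2 | t < ⟪x, (w:E3)⟫} ∩ {w : S2 | t < ⟪y, (w:E3)⟫})
          (fun _ => 1) := by
  funext w
  simp only [Set.indicator_apply, Set.mem_inter_iff, Set.mem_setOf_eq]
  by_cases h1 : t < ⟪x, (w:E3)⟫ <;> by_cases h2 : t < ⟪y, (w:E3)⟫ <;>
    simp only [h1, h2, and_self, and_true, true_and, and_false, false_and, if_true, if_false,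
      mul_one, mul_zero, one_mul, zero_mul]

lemma integrable_indicator_one' {s : Set S2} (hs : MeasurableSet s) :
    Integrable (Set.indicator s fun _ => (1:ℝ)) sigmaSphere :=
  (integrable_indicator_iff hs).2 (integrableOn_const (measure_ne_top _ _))

lemma integrable_ite_cap (x : E3) (t : ℝ) :
    Integrable (fun w : S2 => if t < ⟪x, (w:E3)⟫ then (1:ℝ) else 0) sigmaSphere := by
  rw [ite_eq_indicator]
  exact integrable_indicator_one' (cap_measurable x t)

lemma integrable_ite_cap2 (x y : E3) (t : ℝ) :
    Integrable (fun w : S2 => (if t < ⟪x, (w:E3)⟫ then (1:ℝ) else 0) *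
      (if t < ⟪y, (w:E3)⟫ then (1:ℝ) else 0)) sigmaSphere := by
  rw [ite2_eq_indicator]
  exact integrable_indicator_one' ((cap_measurable x t).inter (cap_measurable y t))

lemma integral_ite_cap (x : E3) (t : ℝ) :
    ∫ w, (if t < ⟪x, (w:E3)⟫ then (1:ℝ) else 0) ∂sigmaSphere
      = (sigmaSphere {w : S2 | t < ⟪x, (w:E3)⟫}).toReal := by
  rw [ite_eq_indicator]
  exact integral_indicator_one (cap_measurable x t)

lemma integral_ite_cap2 (x y : E3) (t : ℝ) :
    ∫ w, ((if t < ⟪x, (w:E3)⟫ then (1:ℝ) else 0) *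
        (if t < ⟪y, (w:E3)⟫ then (1:ℝ) else 0)) ∂sigmaSphere
      = (sigmaSphere ({w : S2 | t < ⟪x, (w:E3)⟫} ∩ {w : S2 | t < ⟪y, (w:E3)⟫})).toReal := by
  rw [ite2_eq_indicator]
  exact integral_indicator_one ((cap_measurable x t).inter (cap_measurable y t))

lemma pair_integral (x y : E3) (hx : ‖x‖ = 1) (hy : ‖y‖ = 1) :
    ∫ t in (-1:ℝ)..1, (sigmaSphere ({w : S2 | t < ⟪x, (w:E3)⟫} ∩
        {w : S2 | t < ⟪y, (w:E3)⟫})).toReal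
      = 1 - ‖x - y‖/4 := by
  haveI hfin : IsFiniteMeasure (volume.restrict (Set.Ioc (-1:ℝ) 1)) := by
    constructor
    rw [Measure.restrict_apply MeasurableSet.univ, Set.univ_inter, Real.volume_Ioc]
    exact ENNReal.ofReal_lt_top
  set f : ℝ → S2 → ℝ := fun t w =>
    if (t < ⟪x, (w:E3)⟫ ∧ t < ⟪y, (w:E3)⟫) then (1:ℝ) else 0 with hf_def
  have hU : MeasurableSet {p : ℝ × S2 | p.1 < ⟪x, (p.2:E3)⟫ ∧ p.1 < ⟪y, (p.2:E3)⟫} :=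
    (measurableSet_lt measurable_fst ((inner_measurable x).comp measurable_snd)).inter
      (measurableSet_lt measurable_fst ((inner_measurable y).comp measurable_snd))
  have hunc : Function.uncurry f
      = Set.indicator {p : ℝ × S2 | p.1 < ⟪x, (p.2:E3)⟫ ∧ p.1 < ⟪y, (p.2:E3)⟫}
          (fun _ => (1:ℝ)) := by
    funext p
    simp only [Function.uncurry, Set.indicator_apply, Set.mem_setOf_eq, hf_def]
  have hInt : Integrable (Function.uncurry f)
      ((volume.restrict (Set.Ioc (-1:ℝ) 1)).prod sigmaSphere) := by
    rw [hunc]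
    exact (integrable_indicator_iff hU).2 (integrableOn_const (measure_ne_top _ _))
  have hswap := MeasureTheory.integral_integral_swap hInt
  have hleft : (∫ t, ∫ w, f t w ∂sigmaSphere ∂(volume.restrict (Set.Ioc (-1:ℝ) 1)))
      = ∫ t in (-1:ℝ)..1, (sigmaSphere ({w : S2 | t < ⟪x, (w:E3)⟫} ∩
          {w : S2 | t < ⟪y, (w:E3)⟫})).toReal := by
    rw [intervalIntegral.integral_of_le (by norm_num : (-1:ℝ) ≤ 1)]
    apply integral_congr_ae
    apply Filter.Eventually.of_forall
    intro t
    show (∫ w, f t w ∂sigmaSphere) = (sigmaSphere ({w : S2 | t < ⟪x, (w:E3)⟫} ∩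
        {w : S2 | t < ⟪y, (w:E3)⟫})).toReal
    have hfw : (fun w : S2 => f t w) = Set.indicator ({w : S2 | t < ⟪x, (w:E3)⟫} ∩
        {w : S2 | t < ⟪y, (w:E3)⟫}) (fun _ => (1:ℝ)) := by
      funext w
      simp only [Set.indicator_apply, Set.mem_inter_iff, Set.mem_setOf_eq, hf_def]
    rw [hfw]
    exact integral_indicator_one ((cap_measurable x t).inter (cap_measurable y t))
  have hin : ∀ w : S2, (∫ t, f t w ∂(volume.restrict (Set.Ioc (-1:ℝ) 1)))
      = min ⟪x, (w:E3)⟫ ⟪y, (w:E3)⟫ + 1 := by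
    intro w
    set m := min (⟪x, (w:E3)⟫ : ℝ) ⟪y, (w:E3)⟫ with hm_def
    have hm1 : -1 ≤ m := by
      rcases min_cases (⟪x, (w:E3)⟫ : ℝ) ⟪y, (w:E3)⟫ with ⟨h, -⟩ | ⟨h, -⟩ <;>
        rw [hm_def, h]
      · linarith [(abs_le.1 (inner_abs_le x hx w)).1]
      · linarith [(abs_le.1 (inner_abs_le y hy w)).1]
    have hm2 : m ≤ 1 := by
      rcases min_cases (⟪x, (w:E3)⟫ : ℝ) ⟪y, (w:E3)⟫ with ⟨h, -⟩ | ⟨h, -⟩ <;>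
        rw [hm_def, h]
      · linarith [(abs_le.1 (inner_abs_le x hx w)).2]
      · linarith [(abs_le.1 (inner_abs_le y hy w)).2]
    have hft : (fun t : ℝ => f t w) = Set.indicator (Set.Iio m) (fun _ => (1:ℝ)) := by
      funext t
      simp only [Set.indicator_apply, Set.mem_Iio, hm_def, lt_min_iff, hf_def]
    calc (∫ t, f t w ∂(volume.restrict (Set.Ioc (-1:ℝ) 1)))
        = ((volume.restrict (Set.Ioc (-1:ℝ) 1)) (Set.Iio m)).toReal := by
          rw [hft]
          exact integral_indicator_one measurableSet_Iio
      _ = m + 1 := by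
          rw [Measure.restrict_apply measurableSet_Iio]
          have hset : Set.Iio m ∩ Set.Ioc (-1:ℝ) 1 = Set.Ioo (-1) m := by
            ext s
            simp only [Set.mem_inter_iff, Set.mem_Iio, Set.mem_Ioc, Set.mem_Ioo]
            constructor
            · rintro ⟨h1, h2, h3⟩; exact ⟨h2, h1⟩
            · rintro ⟨h1, h2⟩; exact ⟨h2, h1, le_trans h2.le hm2⟩
          rw [hset, Real.volume_Ioo, ENNReal.toReal_ofReal (by linarith)]
          ring
  rw [← hleft, hswap, integral_congr_ae (Filter.Eventually.of_forall hin),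
    min_integral x y hx hy]

lemma inner_expansion {N : ℕ} (hN : 0 < N) (z : Fin N → S2) (t : ℝ)
    (ht : t ∈ Set.Icc (-1:ℝ) 1) :
    ∫ w, |(∑ n, if t < ⟪(w:E3), (z n : E3)⟫ then (1:ℝ) else 0) / N -
        (sigmaSphere {y : S2 | t < ⟪(w:E3), (y:E3)⟫}).toReal| ^ 2 ∂sigmaSphere
      = (1/(N:ℝ)^2) * ∑ j, ∑ k, (sigmaSphere ({w : S2 | t < ⟪(z j : E3), (w:E3)⟫} ∩
          {w : S2 | t < ⟪(z k : E3), (w:E3)⟫})).toReal - ((1-t)/2)^2 := by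
  have hNr : ((N:ℝ)) ≠ 0 := Nat.cast_ne_zero.2 hN.ne'
  have hunit : ∀ w : S2, ‖(w : E3)‖ = 1 := fun w => by
    have := w.2; rwa [mem_sphere_zero_iff_norm] at this
  set c : ℝ := (1 - t)/2 with hc
  have key : ∀ w : S2, |(∑ n, if t < ⟪(w:E3), (z n : E3)⟫ then (1:ℝ) else 0) / N -
        (sigmaSphere {y : S2 | t < ⟪(w:E3), (y:E3)⟫}).toReal| ^ 2
      = (1/(N:ℝ)^2) * (∑ j, ∑ k, (if t < ⟪(z j : E3), (w:E3)⟫ then (1:ℝ) else 0) *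
          (if t < ⟪(z k : E3), (w:E3)⟫ then (1:ℝ) else 0))
        - (2*c/(N:ℝ)) * (∑ n, (if t < ⟪(z n : E3), (w:E3)⟫ then (1:ℝ) else 0)) + c^2 := by
    intro w
    have hσ : (sigmaSphere {y : S2 | t < ⟪(w:E3), (y:E3)⟫}).toReal = c := by
      rw [cap_measure ((w:E3)) (hunit w) t ht, hc, ENNReal.toReal_ofReal (by linarith [ht.2])]
    have hflip : ∀ n, (if t < ⟪(w:E3), (z n : E3)⟫ then (1:ℝ) else 0)
        = (if t < ⟪(z n : E3), (w:E3)⟫ then (1:ℝ) else 0) := fun n => by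
      rw [real_inner_comm]
    simp only [hflip, hσ]
    rw [sq_abs, ← Finset.sum_mul_sum]
    field_simp
    ring
  rw [integral_congr_ae (Filter.Eventually.of_forall key)]
  have hI2 : Integrable (fun w : S2 => ∑ j, ∑ k,
      (if t < ⟪(z j : E3), (w:E3)⟫ then (1:ℝ) else 0) *
      (if t < ⟪(z k : E3), (w:E3)⟫ then (1:ℝ) else 0)) sigmaSphere :=
    integrable_finset_sum _ (fun j _ => integrable_finset_sum _
      (fun k _ => integrable_ite_cap2 _ _ t))
  have hI1 : Integrable (fun w : S2 => (1/(N:ℝ)^2) * ∑ j, ∑ k,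
      (if t < ⟪(z j : E3), (w:E3)⟫ then (1:ℝ) else 0) *
      (if t < ⟪(z k : E3), (w:E3)⟫ then (1:ℝ) else 0)) sigmaSphere :=
    hI2.const_mul _
  have hI3 : Integrable (fun w : S2 => ∑ n,
      (if t < ⟪(z n : E3), (w:E3)⟫ then (1:ℝ) else 0)) sigmaSphere :=
    integrable_finset_sum _ (fun n _ => integrable_ite_cap _ t)
  have hI4 : Integrable (fun w : S2 => (2*c/(N:ℝ)) * ∑ n,
      (if t < ⟪(z n : E3), (w:E3)⟫ then (1:ℝ) else 0)) sigmaSphere :=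
    hI3.const_mul _
  have hI5 : Integrable (fun w : S2 => (1/(N:ℝ)^2) * (∑ j, ∑ k,
      (if t < ⟪(z j : E3), (w:E3)⟫ then (1:ℝ) else 0) *
      (if t < ⟪(z k : E3), (w:E3)⟫ then (1:ℝ) else 0))
        - (2*c/(N:ℝ)) * ∑ n, (if t < ⟪(z n : E3), (w:E3)⟫ then (1:ℝ) else 0)) sigmaSphere :=
    hI1.sub hI4
  rw [integral_add hI5 (integrable_const _), integral_sub hI1 hI4, integral_const_mul,
    integral_const_mul, integral_finset_sum _ (fun j _ => integrable_finset_sum _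
      (fun k _ => integrable_ite_cap2 _ _ t)),
    integral_finset_sum _ (fun n _ => integrable_ite_cap _ t)]
  have hq : ∀ j k : Fin N, ∫ w, ((if t < ⟪(z j : E3), (w:E3)⟫ then (1:ℝ) else 0) *
      (if t < ⟪(z k : E3), (w:E3)⟫ then (1:ℝ) else 0)) ∂sigmaSphere
      = (sigmaSphere ({w : S2 | t < ⟪(z j : E3), (w:E3)⟫} ∩
          {w : S2 | t < ⟪(z k : E3), (w:E3)⟫})).toReal := fun j k =>
    integral_ite_cap2 _ _ t
  have hsum1 : ∑ j : Fin N, ∫ w, (∑ k, (if t < ⟪(z j : E3), (w:E3)⟫ then (1:ℝ) else 0) *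
      (if t < ⟪(z k : E3), (w:E3)⟫ then (1:ℝ) else 0)) ∂sigmaSphere
      = ∑ j, ∑ k, (sigmaSphere ({w : S2 | t < ⟪(z j : E3), (w:E3)⟫} ∩
          {w : S2 | t < ⟪(z k : E3), (w:E3)⟫})).toReal := by
    refine Finset.sum_congr rfl (fun j _ => ?_)
    rw [integral_finset_sum _ (fun k _ => integrable_ite_cap2 _ _ t)]
    exact Finset.sum_congr rfl (fun k _ => hq j k)
  have hsum2 : ∑ n : Fin N, ∫ w, (if t < ⟪(z n : E3), (w:E3)⟫ then (1:ℝ) else 0) ∂sigmaSphere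
      = (N:ℝ) * c := by
    have : ∀ n : Fin N, ∫ w, (if t < ⟪(z n : E3), (w:E3)⟫ then (1:ℝ) else 0) ∂sigmaSphere
        = c := by
      intro n
      rw [integral_ite_cap _ t, cap_measure ((z n : E3)) ?_ t ht, hc,
        ENNReal.toReal_ofReal (by linarith [ht.2])]
      exact hunit (z n)
    rw [Finset.sum_congr rfl (fun n _ => this n), Finset.sum_const, Finset.card_univ,
      Fintype.card_fin, nsmul_eq_mul]
  rw [hsum1, hsum2, integral_const]
  have hmu : (sigmaSphere Set.univ).toReal = 1 := by
    simp [measure_univ]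
  rw [measureReal_def, hmu, one_smul]
  have harith : (2*c/(N:ℝ)) * ((N:ℝ) * c) = 2*c^2 := by
    field_simp
  rw [harith]
  ring

lemma double_integral_const :
    (∫ z', ∫ w', ‖(z' : E3) - (w' : E3)‖ ∂sigmaSphere ∂sigmaSphere) = 4/3 := by
  have hunit : ∀ w : S2, ‖(w : E3)‖ = 1 := fun w => by
    have := w.2; rwa [mem_sphere_zero_iff_norm] at this
  have hinner : ∀ z' : S2, (∫ w', ‖(z' : E3) - (w' : E3)‖ ∂sigmaSphere) = 4/3 := by
    intro z'
    have hpt : ∀ w : S2, ‖(z' : E3) - (w : E3)‖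
        = Real.sqrt (2 - 2*⟪(z' : E3), (w : E3)⟫) := by
      intro w
      rw [← Real.sqrt_sq (norm_nonneg ((z' : E3) - (w : E3))), norm_sub_sq_real,
        hunit z', hunit w]
      congr 1
      ring
    rw [integral_congr_ae (Filter.Eventually.of_forall hpt),
      integral_inner_comp (z' : E3) (hunit z') (fun s => Real.sqrt (2 - 2*s))
        (by continuity), integral_sqrt_two_sub]
    norm_num
  rw [integral_congr_ae (Filter.Eventually.of_forall hinner), integral_const]
  simp [measure_univ]

end Stolarsky

/-- Stolarsky's invariance principle on `S²`. -/
theorem stolarsky_invariance (N : ℕ) (hN : 0 < N)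
    (z : Fin N → sphere (0 : EuclideanSpace ℝ (Fin 3)) 1) :
    ((1 / (N : ℝ) ^ 2) *
        ∑ j, ∑ k, ‖(z j : EuclideanSpace ℝ (Fin 3)) - (z k : EuclideanSpace ℝ (Fin 3))‖ +
      4 * ∫ t in (-1 : ℝ)..1, ∫ w,
        |(∑ n, if t < ⟪(w : EuclideanSpace ℝ (Fin 3)),
            (z n : EuclideanSpace ℝ (Fin 3))⟫ then (1 : ℝ) else 0) / N -
          (sigmaSphere {y : sphere (0 : EuclideanSpace ℝ (Fin 3)) 1 |
            t < ⟪(w : EuclideanSpace ℝ (Fin 3)), (y : EuclideanSpace ℝ (Fin 3))⟫}).toReal| ^ 2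
        ∂sigmaSphere =
      ∫ z', ∫ w', ‖(z' : EuclideanSpace ℝ (Fin 3)) - (w' : EuclideanSpace ℝ (Fin 3))‖
        ∂sigmaSphere ∂sigmaSphere) ∧
    (∫ z', ∫ w', ‖(z' : EuclideanSpace ℝ (Fin 3)) - (w' : EuclideanSpace ℝ (Fin 3))‖
        ∂sigmaSphere ∂sigmaSphere = 4 / 3) := by
  have hNr : ((N:ℝ)) ≠ 0 := Nat.cast_ne_zero.2 hN.ne'
  have hunit : ∀ w : Stolarsky.S2, ‖(w : Stolarsky.E3)‖ = 1 := fun w => by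
    have := w.2; rwa [mem_sphere_zero_iff_norm] at this
  have hanti : ∀ j k : Fin N, Antitone (fun t : ℝ =>
      (sigmaSphere ({w : Stolarsky.S2 | t < ⟪(z j : Stolarsky.E3), (w:Stolarsky.E3)⟫} ∩
        {w : Stolarsky.S2 | t < ⟪(z k : Stolarsky.E3), (w:Stolarsky.E3)⟫})).toReal) := by
    intro j k a b hab
    apply ENNReal.toReal_mono (measure_ne_top _ _)
    apply measure_mono
    rintro w ⟨h1, h2⟩
    exact ⟨lt_of_le_of_lt hab h1, lt_of_le_of_lt hab h2⟩
  have hanti2 : ∀ j : Fin N, Antitone (fun t : ℝ => ∑ k,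
      (sigmaSphere ({w : Stolarsky.S2 | t < ⟪(z j : Stolarsky.E3), (w:Stolarsky.E3)⟫} ∩
        {w : Stolarsky.S2 | t < ⟪(z k : Stolarsky.E3), (w:Stolarsky.E3)⟫})).toReal) := by
    intro j a b hab
    exact Finset.sum_le_sum (fun k _ => hanti j k hab)
  have hanti3 : Antitone (fun t : ℝ => ∑ j, ∑ k,
      (sigmaSphere ({w : Stolarsky.S2 | t < ⟪(z j : Stolarsky.E3), (w:Stolarsky.E3)⟫} ∩
        {w : Stolarsky.S2 | t < ⟪(z k : Stolarsky.E3), (w:Stolarsky.E3)⟫})).toReal) := by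
    intro a b hab
    exact Finset.sum_le_sum (fun j _ => hanti2 j hab)
  have hdisc : (∫ t in (-1 : ℝ)..1, ∫ w,
        |(∑ n, if t < ⟪(w : Stolarsky.E3), (z n : Stolarsky.E3)⟫ then (1 : ℝ) else 0) / N -
          (sigmaSphere {y : Stolarsky.S2 |
            t < ⟪(w : Stolarsky.E3), (y : Stolarsky.E3)⟫}).toReal| ^ 2 ∂sigmaSphere)
      = (1/(N:ℝ)^2) * (∑ j, ∑ k, (1 - ‖(z j : Stolarsky.E3) - (z k : Stolarsky.E3)‖/4))
        - 2/3 := by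
    rw [intervalIntegral.integral_congr
      (g := fun t : ℝ => (1/(N:ℝ)^2) * ∑ j, ∑ k,
        (sigmaSphere ({w : Stolarsky.S2 | t < ⟪(z j : Stolarsky.E3), (w:Stolarsky.E3)⟫} ∩
          {w : Stolarsky.S2 | t < ⟪(z k : Stolarsky.E3), (w:Stolarsky.E3)⟫})).toReal
        - ((1-t)/2)^2)
      (fun t ht => by
        rw [Set.uIcc_of_le (by norm_num : (-1:ℝ) ≤ 1)] at ht
        exact Stolarsky.inner_expansion hN z t ht)]
    rw [intervalIntegral.integral_sub
      ((hanti3.intervalIntegrable).const_mul _)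
      ((by fun_prop : Continuous fun t : ℝ => ((1 - t)/2)^2).intervalIntegrable _ _),
      intervalIntegral.integral_const_mul, Stolarsky.integral_poly,
      intervalIntegral.integral_finset_sum (fun j _ => (hanti2 j).intervalIntegrable)]
    have hps : ∀ j : Fin N, (∫ t in (-1:ℝ)..1, ∑ k,
        (sigmaSphere ({w : Stolarsky.S2 | t < ⟪(z j : Stolarsky.E3), (w:Stolarsky.E3)⟫} ∩
          {w : Stolarsky.S2 | t < ⟪(z k : Stolarsky.E3), (w:Stolarsky.E3)⟫})).toReal)
        = ∑ k, (1 - ‖(z j : Stolarsky.E3) - (z k : Stolarsky.E3)‖/4) := by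
      intro j
      rw [intervalIntegral.integral_finset_sum (fun k _ => (hanti j k).intervalIntegrable)]
      exact Finset.sum_congr rfl (fun k _ =>
        Stolarsky.pair_integral _ _ (hunit (z j)) (hunit (z k)))
    rw [Finset.sum_congr rfl (fun j _ => hps j)]
  constructor
  · rw [hdisc, Stolarsky.double_integral_const]
    have h1 : ∀ j : Fin N, ∑ k, ((1:ℝ) -
        ‖(z j : Stolarsky.E3) - (z k : Stolarsky.E3)‖/4)
        = (N:ℝ) - (∑ k, ‖(z j : Stolarsky.E3) - (z k : Stolarsky.E3)‖)/4 := by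
      intro j
      rw [Finset.sum_sub_distrib, Finset.sum_const, Finset.card_univ, Fintype.card_fin,
        nsmul_eq_mul, mul_one, Finset.sum_div]
    have hsplit : ∑ j, ∑ k, ((1:ℝ) - ‖(z j : Stolarsky.E3) - (z k : Stolarsky.E3)‖/4)
        = (N:ℝ)^2 - (∑ j, ∑ k, ‖(z j : Stolarsky.E3) - (z k : Stolarsky.E3)‖)/4 := by
      rw [Finset.sum_congr rfl (fun j _ => h1 j), Finset.sum_sub_distrib, Finset.sum_const,
        Finset.card_univ, Fintype.card_fin, nsmul_eq_mul, ← Finset.sum_div]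
      ring
    rw [hsplit]
    field_simp
    ring
  · exact Stolarsky.double_integral_const
end

section
/- For 0 < v < 1 and 0 < τ < 1, the cubic polynomial Q(x) = x³ + p x + q with p = −[(1−2v)² + B²(1+2H²)]/[B²(1+H²)] and q = 2(1−2v)(1−2τ)/[B(1+H²)], where B = √((1−v)v)/√((1−τ)τ) and H = 1−2τ, has positive discriminant −4p³ − 27q² > 0, and hence three distinct real roots. -/
lemma key_ineq (s t : ℝ) (hs0 : 0 ≤ s) (hs1 : s < 1) (ht0 : 0 ≤ t) (ht1 : t < 1) :
    27 * s * t * (1 - s) ^ 2 * (1 - t ^ 2) < (1 + 2 * t - 3 * s * t) ^ 3 := by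
  rcases eq_or_lt_of_le hs0 with hs | hs
  · subst hs
    nlinarith [pow_pos (by linarith : (0:ℝ) < 1 + 2*t) 3]
  · have h1 : (0:ℝ) < 1 - s := by linarith
    have h2 : (0:ℝ) < 1 - t := by linarith
    nlinarith [mul_nonneg (sq_nonneg (s*(1-t) - (1-s)*(1+2*t)/2))
        (by nlinarith : (0:ℝ) ≤ s*(1-t) + 4*(1-s)*(1+2*t)),
      mul_pos (mul_pos (mul_pos hs h2) h1) h1]


lemma cubic_three_roots (p q : ℝ) (h : 0 < -4 * p ^ 3 - 27 * q ^ 2) :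
    ∃ x₁ x₂ x₃ : ℝ, x₁ ≠ x₂ ∧ x₁ ≠ x₃ ∧ x₂ ≠ x₃ ∧
      x₁ ^ 3 + p * x₁ + q = 0 ∧ x₂ ^ 3 + p * x₂ + q = 0 ∧ x₃ ^ 3 + p * x₃ + q = 0 := by
  have hq2 : 0 ≤ q ^ 2 := sq_nonneg q
  have hp : p < 0 := by nlinarith [sq_nonneg p, sq_nonneg (p+1)]
  set m := Real.sqrt (-p / 3) with hm_def
  have hm : 0 < m := Real.sqrt_pos.mpr (by linarith)
  have hm2 : m ^ 2 = -p / 3 := Real.sq_sqrt (by linarith)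
  have hfm : m ^ 3 + p * m + q < 0 := by
    have h1 : m ^ 3 = m * (-p/3) := by rw [pow_succ, hm2]; ring
    have hr : 0 < -(2*p/3) * m := mul_pos (by linarith) hm
    have hrq : q ^ 2 < (-(2*p/3) * m) ^ 2 := by nlinarith [hm2]
    nlinarith [hrq, hr]
  have hfnm : 0 < (-m) ^ 3 + p * (-m) + q := by
    have h1 : m ^ 3 = m * (-p/3) := by rw [pow_succ, hm2]; ring
    have hr : 0 < -(2*p/3) * m := mul_pos (by linarith) hm
    have hrq : q ^ 2 < (-(2*p/3) * m) ^ 2 := by nlinarith [hm2]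
    nlinarith [hrq, hr]
  set c := m + 1 + |p| + |q| with hc_def
  have hcm : m < c := by have := abs_nonneg p; have := abs_nonneg q; linarith
  have hc1 : 1 ≤ c := by have := abs_nonneg p; have := abs_nonneg q; linarith
  have hc0 : (0:ℝ) ≤ c := by linarith
  have hfc : 0 < c ^ 3 + p * c + q := by
    have h1 : -|p| ≤ p := neg_abs_le p
    have h2 : -|q| ≤ q := neg_abs_le q
    have h3 : |p| + |q| < c := by linarith
    nlinarith [abs_nonneg p, abs_nonneg q, mul_le_mul_of_nonneg_left h1 hc0,
      mul_lt_mul_of_pos_left h3 (by linarith : (0:ℝ) < c), sq_nonneg (c - 1)]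
  have hfnc : (-c) ^ 3 + p * (-c) + q < 0 := by
    have h1 : -|p| ≤ p := neg_abs_le p
    have h2 : q ≤ |q| := le_abs_self q
    have h3 : |p| + |q| < c := by linarith
    nlinarith [abs_nonneg p, abs_nonneg q, mul_le_mul_of_nonneg_left h1 hc0,
      mul_lt_mul_of_pos_left h3 (by linarith : (0:ℝ) < c),
      mul_nonneg (mul_nonneg hc0 hc0) (by linarith : (0:ℝ) ≤ c - 1),
      mul_le_mul_of_nonneg_left hc1 (abs_nonneg q)]
  set f : ℝ → ℝ := fun x => x ^ 3 + p * x + q with hf_def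
  have hcont : Continuous f := by fun_prop
  obtain ⟨x₁, hx₁m, hx₁⟩ := intermediate_value_Icc (by linarith : -c ≤ -m)
    hcont.continuousOn ⟨hfnc.le, hfnm.le⟩
  obtain ⟨x₂, hx₂m, hx₂⟩ := intermediate_value_Icc' (by linarith : -m ≤ m)
    hcont.continuousOn ⟨hfm.le, hfnm.le⟩
  obtain ⟨x₃, hx₃m, hx₃⟩ := intermediate_value_Icc (by linarith : m ≤ c)
    hcont.continuousOn ⟨hfm.le, hfc.le⟩
  have h1 : x₁ < -m := lt_of_le_of_ne hx₁m.2
    (fun heq => by rw [heq] at hx₁; simp only [hf_def] at hx₁; linarith)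
  have h2a : -m < x₂ := lt_of_le_of_ne hx₂m.1
    (fun heq => by rw [← heq] at hx₂; simp only [hf_def] at hx₂; linarith)
  have h2b : x₂ < m := lt_of_le_of_ne hx₂m.2
    (fun heq => by rw [heq] at hx₂; simp only [hf_def] at hx₂; linarith)
  have h3a : m < x₃ := lt_of_le_of_ne hx₃m.1
    (fun heq => by rw [← heq] at hx₃; simp only [hf_def] at hx₃; linarith)
  exact ⟨x₁, x₂, x₃, by linarith, by linarith, by linarith, hx₁, hx₂, hx₃⟩

/-- The curvature polynomial `Q(x) = x³ + px + q` has positive discriminant, hence three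
distinct real roots. -/
theorem curvature_cubic_discriminant (v τ : ℝ) (hv : v ∈ Set.Ioo (0 : ℝ) 1)
    (hτ : τ ∈ Set.Ioo (0 : ℝ) 1) :
    let B := Real.sqrt ((1 - v) * v) / Real.sqrt ((1 - τ) * τ)
    let H := 1 - 2 * τ
    let p := -(((1 - 2 * v) ^ 2 + B ^ 2 * (1 + 2 * H ^ 2)) / (B ^ 2 * (1 + H ^ 2)))
    let q := 2 * (1 - 2 * v) * (1 - 2 * τ) / (B * (1 + H ^ 2))
    0 < -4 * p ^ 3 - 27 * q ^ 2 ∧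
    ∃ x₁ x₂ x₃ : ℝ, x₁ ≠ x₂ ∧ x₁ ≠ x₃ ∧ x₂ ≠ x₃ ∧
      x₁ ^ 3 + p * x₁ + q = 0 ∧ x₂ ^ 3 + p * x₂ + q = 0 ∧ x₃ ^ 3 + p * x₃ + q = 0 := by
  obtain ⟨hv0, hv1⟩ := hv
  obtain ⟨ht0', ht1'⟩ := hτ
  intro B H p q
  have hP : 0 < (1 - v) * v := by nlinarith
  have hT : 0 < (1 - τ) * τ := by nlinarith
  have hB : 0 < B := div_pos (Real.sqrt_pos.mpr hP) (Real.sqrt_pos.mpr hT)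
  have hB2 : B ^ 2 = ((1 - v) * v) / ((1 - τ) * τ) := by
    show (Real.sqrt ((1 - v) * v) / Real.sqrt ((1 - τ) * τ)) ^ 2 = _
    rw [div_pow, Real.sq_sqrt hP.le, Real.sq_sqrt hT.le]
  have hHdef : H = 1 - 2 * τ := rfl
  have hpdef : p = -(((1 - 2 * v) ^ 2 + B ^ 2 * (1 + 2 * H ^ 2)) / (B ^ 2 * (1 + H ^ 2))) := rfl
  have hqdef : q = 2 * (1 - 2 * v) * (1 - 2 * τ) / (B * (1 + H ^ 2)) := rfl
  set s := (1 - 2 * v) ^ 2 with hs_def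
  set t := (1 - 2 * τ) ^ 2 with ht_def
  have hs0 : 0 ≤ s := sq_nonneg _
  have ht0 : 0 ≤ t := sq_nonneg _
  have hs1 : s < 1 := by rw [hs_def]; nlinarith
  have ht1 : t < 1 := by rw [ht_def]; nlinarith
  have h1s : (0:ℝ) < 1 - s := by linarith
  have h1t : (0:ℝ) < 1 + t := by linarith
  have hTne : (1 - τ) * τ ≠ 0 := ne_of_gt hT
  have hPne : (1 - v) * v ≠ 0 := ne_of_gt hP
  have hp' : p = -((1 + 2 * t - 3 * s * t) / ((1 - s) * (1 + t))) := by
    rw [hpdef, hB2, hs_def, ht_def]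
    have hne : (1:ℝ) - (1 - 2 * v) ^ 2 ≠ 0 := (by nlinarith : (0:ℝ) < 1 - (1 - 2 * v) ^ 2).ne'
    field_simp
    ring
  have hq2' : q ^ 2 = 4 * s * t * (1 - t) / ((1 - s) * (1 + t) ^ 2) := by
    rw [hqdef, div_pow, mul_pow B (1 + t) 2, hB2, hs_def, ht_def]
    have hne : (1:ℝ) - (1 - 2 * v) ^ 2 ≠ 0 := (by nlinarith : (0:ℝ) < 1 - (1 - 2 * v) ^ 2).ne'
    field_simp
    ring
  have hdisc : 0 < -4 * p ^ 3 - 27 * q ^ 2 := by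
    have heq : -4 * p ^ 3 - 27 * q ^ 2 =
        4 * ((1 + 2 * t - 3 * s * t) ^ 3 - 27 * s * t * (1 - s) ^ 2 * (1 - t ^ 2)) /
          ((1 - s) ^ 3 * (1 + t) ^ 3) := by
      rw [hp', hq2']
      field_simp
      ring
    rw [heq]
    have := key_ineq s t hs0 hs1 ht0 ht1
    apply div_pos (by linarith) (by positivity)
  exact ⟨hdisc, cubic_three_roots p q hdisc⟩
end
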